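/- Let G be an infinite, connected, locally finite vertex-transitive graph with growth function Gr. Then Gr(3nm) ≥ n · Gr(m) for all positive integers n and m. -/
import Mathlib


open SimpleGraph

/-- An isomorphism of graphs preserves distances (in the connected case). -/
private lemma iso_dist_le {V : Type} {G : SimpleGraph V} (hconn : G.Connected)
    (φ : G ≃g G) (u v : V) : G.dist (φ u) (φ v) ≤ G.dist u v := by
  obtain ⟨p, hp⟩ := hconn.exists_walk_length_eq_dist u v
  calc G.dist (φ u) (φ v) ≤ (p.map φ.toHom).length := SimpleGraph.dist_le _
    _ = G.dist u v := by rw [SimpleGraph.Walk.length_map, hp]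

private lemma iso_dist {V : Type} {G : SimpleGraph V} (hconn : G.Connected)
    (φ : G ≃g G) (u v : V) : G.dist (φ u) (φ v) = G.dist u v := by
  refine le_antisymm (iso_dist_le hconn φ u v) ?_
  have := iso_dist_le hconn φ.symm (φ u) (φ v)
  simpa using this

/-- Along any walk from `o`, the `i`-th vertex is at distance at most `i`. -/
private lemma dist_getVert_le {V : Type} {G : SimpleGraph V} (hconn : G.Connected) {o v : V}
    (p : G.Walk o v) (i : ℕ) : G.dist o (p.getVert i) ≤ i := by
  induction i with
  | zero => simp
  | succ i ih =>
    by_cases hi : i < p.length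
    · have hadj := p.adj_getVert_succ hi
      have h1 : G.dist (p.getVert i) (p.getVert (i + 1)) ≤ 1 := by
        rw [← SimpleGraph.dist_eq_one_iff_adj] at hadj
        omega
      have := hconn.dist_triangle (u := o) (v := p.getVert i) (w := p.getVert (i+1))
      omega
    · have h1 : p.getVert (i+1) = v := p.getVert_of_length_le (by omega)
      have h2 : p.getVert i = v := p.getVert_of_length_le (by omega)
      rw [h1, ← h2]; omega

/-- Balls are finite in a connected locally finite graph. -/
private lemma ball_finite {V : Type} {G : SimpleGraph V}
    (hconn : G.Connected) (hlf : ∀ v : V, (G.neighborSet v).Finite) (o : V) :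
    ∀ r : ℕ, ({v : V | G.dist o v ≤ r}).Finite := by
  intro r
  induction r with
  | zero =>
    have : {v : V | G.dist o v ≤ 0} = {o} := by
      ext v
      simp [Nat.le_zero, hconn.dist_eq_zero_iff, eq_comm]
    rw [this]; exact Set.finite_singleton o
  | succ r ih =>
    have hsub : {v : V | G.dist o v ≤ r + 1} ⊆
        {v : V | G.dist o v ≤ r} ∪ ⋃ u ∈ {v : V | G.dist o v ≤ r}, G.neighborSet u := by
      intro v hv
      simp only [Set.mem_setOf_eq] at hv
      by_cases h : G.dist o v ≤ r
      · exact Or.inl h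
      · have hd : G.dist o v = r + 1 := by omega
        obtain ⟨p, hp⟩ := hconn.exists_walk_length_eq_dist o v
        right
        refine Set.mem_biUnion
          (show G.dist o (p.getVert r) ≤ r from dist_getVert_le hconn p r) ?_
        have : p.getVert (r + 1) = v := by
          have hlen : p.length = r + 1 := by omega
          rw [← hlen]; exact p.getVert_length
        have hadj := p.adj_getVert_succ (i := r) (by omega)
        rw [this] at hadj
        exact hadj
    exact (ih.union (ih.biUnion fun u _ => hlf u)).subset hsub

/-- In an infinite connected locally finite graph there are vertices at every exact distance. -/
private lemma exists_dist_eq' {V : Type} [Infinite V] {G : SimpleGraph V}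
    (hconn : G.Connected) (hlf : ∀ v : V, (G.neighborSet v).Finite) (o : V) (d : ℕ) :
    ∃ x : V, G.dist o x = d := by
  -- there is a vertex at distance > d
  obtain ⟨w, hw⟩ : ∃ w : V, ¬ G.dist o w ≤ d := by
    by_contra h
    push_neg at h
    exact Set.infinite_univ ((ball_finite hconn hlf o d).subset (fun v _ => h v))
  push_neg at hw
  obtain ⟨p, hp⟩ := hconn.exists_walk_length_eq_dist o w
  -- Nat.find: least i with dist o (getVert i) ≥ d
  have hex : ∃ i, d ≤ G.dist o (p.getVert i) := ⟨p.length, by rw [p.getVert_length]; omega⟩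
  classical
  let i := Nat.find hex
  have hi : d ≤ G.dist o (p.getVert i) := Nat.find_spec hex
  have hub : G.dist o (p.getVert i) ≤ i := dist_getVert_le hconn p i
  rcases Nat.eq_zero_or_pos i with h0 | hpos
  · refine ⟨p.getVert i, ?_⟩
    omega
  · have hlt := Nat.find_min hex (m := i - 1) (by omega)
    push_neg at hlt
    -- dist at i ≤ dist at (i-1) + 1 ≤ d
    have hstep : G.dist o (p.getVert i) ≤ G.dist o (p.getVert (i - 1)) + 1 := by
      by_cases hil : i - 1 < p.length
      · have hadj := p.adj_getVert_succ hil
        have : i - 1 + 1 = i := by omega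
        rw [this] at hadj
        have h1 : G.dist (p.getVert (i-1)) (p.getVert i) ≤ 1 := by
          rw [← SimpleGraph.dist_eq_one_iff_adj] at hadj; omega
        have := hconn.dist_triangle (u := o) (v := p.getVert (i-1)) (w := p.getVert i)
        omega
      · have h1 : p.getVert i = w := p.getVert_of_length_le (by omega)
        have h2 : p.getVert (i-1) = w := p.getVert_of_length_le (by omega)
        rw [h1]; rw [h2]; omega
    exact ⟨p.getVert i, by omega⟩

/-- For an infinite, connected, locally finite, vertex-transitive graph,
`Gr(3nm) ≥ n · Gr(m)` for all positive integers `n, m`, where `Gr(r)` is the number of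
vertices within distance `r` of a fixed root `o`. -/
theorem growth_lower_bound (V : Type) [Infinite V] (G : SimpleGraph V)
    (hconn : G.Connected) (hlf : ∀ v : V, (G.neighborSet v).Finite)
    (htrans : ∀ u v : V, ∃ φ : G ≃g G, φ u = v)
    (o : V) (n m : ℕ) (hn : 0 < n) (hm : 0 < m) :
    n * ({v : V | G.dist o v ≤ m}).ncard ≤ ({v : V | G.dist o v ≤ 3 * n * m}).ncard := by
  classical
  -- pick points x i at distance 3*i*m
  choose x hx using fun i : Fin n => exists_dist_eq' hconn hlf o (3 * (i : ℕ) * m)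
  choose φ hφ using fun i : Fin n => htrans o (x i)
  set ball : Set V := {v : V | G.dist o v ≤ m} with hball
  set big : Set V := {v : V | G.dist o v ≤ 3 * n * m} with hbig
  have hbigfin : big.Finite := ball_finite hconn hlf o (3 * n * m)
  haveI : Finite big := hbigfin
  -- the injection
  have key : ∀ (i : Fin n) (v : V), G.dist o v ≤ m → G.dist o (φ i v) ≤ 3 * n * m := by
    intro i v hv
    have h1 : G.dist (x i) (φ i v) ≤ m := by
      rw [← hφ i, iso_dist hconn (φ i) o v]; exact hv
    have h2 := hconn.dist_triangle (u := o) (v := x i) (w := φ i v)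
    have h3 : (3 : ℕ) * i * m + m ≤ 3 * n * m := by
      have : (i : ℕ) < n := i.isLt
      nlinarith
    rw [hx i] at h2
    omega
  have hdisj : ∀ (i j : Fin n) (v w : V), G.dist o v ≤ m → G.dist o w ≤ m →
      φ i v = φ j w → i = j := by
    intro i j v w hv hw heq
    by_contra hne
    have h1 : G.dist (x i) (φ i v) ≤ m := by
      rw [← hφ i, iso_dist hconn (φ i) o v]; exact hv
    have h2 : G.dist (x j) (φ i v) ≤ m := by
      rw [heq, ← hφ j, iso_dist hconn (φ j) o w]; exact hw
    have h3 := hconn.dist_triangle (u := x i) (v := φ i v) (w := x j)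
    rw [SimpleGraph.dist_comm (u := φ i v) (v := x j)] at h3
    have h4 := hconn.dist_triangle (u := o) (v := x i) (w := x j)
    have h5 := hconn.dist_triangle (u := o) (v := x j) (w := x i)
    have h6 : G.dist (x j) (x i) = G.dist (x i) (x j) := SimpleGraph.dist_comm
    have hij : (i : ℕ) ≠ (j : ℕ) := fun h => hne (Fin.ext h)
    have hxi := hx i
    have hxj := hx j
    rcases lt_or_gt_of_ne hij with h | h
    · nlinarith
    · nlinarith
  let f : Fin n × ball → big := fun ⟨i, v, hv⟩ => ⟨φ i v, key i v hv⟩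
  have hinj : Function.Injective f := by
    rintro ⟨i, v, hv⟩ ⟨j, w, hw⟩ heq
    simp only [f, Subtype.mk.injEq] at heq
    have hij : i = j := hdisj i j v w hv hw heq
    subst hij
    have : v = w := (φ i).injective heq
    simp [this]
  have hcard := Nat.card_le_card_of_injective f hinj
  rw [Nat.card_prod, Nat.card_eq_fintype_card, Fintype.card_fin] at hcard
  rwa [Nat.card_coe_set_eq, Nat.card_coe_set_eq] at hcard
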